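/- Let $\pi:\mathbb{C}((z))\to\mathbb{C}[[z]]$ be the projection along the subspace spanned by $\{z^j+z^{-j-2}: j\in\mathbb{Z}\}$. Then for any $f(z)\in\mathbb{C}((z))$ (with only finitely many negative-degree terms) and any $j\in\mathbb{Z}$, one has $\pi\big(f(z)(z^j+z^{-j})\big)=\pi\big(\pi(f(z))(z^j+z^{-j})\big)$. -/

import Mathlib

noncomputable section

lemma coeff_mul_single (x : LaurentSeries ℂ) (j m : ℤ) :
    (x * HahnSeries.single j (1 : ℂ)).coeff m = x.coeff (m - j) := by
  rw [← sub_add_cancel m j, HahnSeries.coeff_mul_single_add, mul_one, sub_add_cancel]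

def laurentPi (f : LaurentSeries ℂ) : PowerSeries ℂ :=
  PowerSeries.mk fun k => f.coeff (k : ℤ) - f.coeff (-(k : ℤ) - 2)

lemma ofPS_coeff (f : LaurentSeries ℂ) (n : ℤ) :
    (HahnSeries.ofPowerSeries ℤ ℂ (laurentPi f)).coeff n =
      if n < 0 then 0 else f.coeff n - f.coeff (-n - 2) := by
  rw [show (HahnSeries.ofPowerSeries ℤ ℂ) (laurentPi f) =
      ((laurentPi f : PowerSeries ℂ) : LaurentSeries ℂ) from rfl,
    PowerSeries.coeff_coe]
  split_ifs with h
  · rfl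
  · rw [laurentPi, PowerSeries.coeff_mk, Int.natAbs_of_nonneg (by omega : (0:ℤ) ≤ n)]

lemma key (f : LaurentSeries ℂ) (n : ℤ) :
    (HahnSeries.ofPowerSeries ℤ ℂ (laurentPi f)).coeff n
      - (HahnSeries.ofPowerSeries ℤ ℂ (laurentPi f)).coeff (-n - 2)
      = f.coeff n - f.coeff (-n - 2) := by
  rw [ofPS_coeff, ofPS_coeff]
  rcases lt_trichotomy n (-1) with h | h | h
  · rw [if_pos (by omega), if_neg (by omega)]
    have : -(-n - 2) - 2 = n := by ring
    rw [this]; ring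
  · subst h; norm_num
  · rw [if_neg (by omega), if_pos (by omega)]; ring

theorem stmt_15 (f : LaurentSeries ℂ) (j : ℤ) :
    laurentPi (f * (HahnSeries.single j (1 : ℂ) + HahnSeries.single (-j) (1 : ℂ))) =
      laurentPi ((HahnSeries.ofPowerSeries ℤ ℂ (laurentPi f)) *
        (HahnSeries.single j (1 : ℂ) + HahnSeries.single (-j) (1 : ℂ))) := by
  have hL : ∀ (x : LaurentSeries ℂ) (k : ℕ),
      PowerSeries.coeff k (laurentPi x) = x.coeff (k : ℤ) - x.coeff (-(k : ℤ) - 2) := by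
    intro x k; rw [laurentPi, PowerSeries.coeff_mk]
  ext k
  rw [hL, hL]
  simp only [mul_add, HahnSeries.coeff_add, coeff_mul_single]
  have h1 := key f ((k : ℤ) - j)
  have h2 := key f ((k : ℤ) + j)
  have a1 : -((k : ℤ) - j) - 2 = -(k : ℤ) - 2 - -j := by ring
  have a2 : -((k : ℤ) + j) - 2 = -(k : ℤ) - 2 - j := by ring
  have a3 : (k : ℤ) - -j = (k : ℤ) + j := by ring
  rw [a1] at h1
  rw [a2] at h2
  rw [a3]
  linear_combination -h1 - h2

end
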